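/- Let ξ : Q → ℝ be measurable on a measure space Q and ρ : Q → ℝ measurable with 0 ≤ ρ ≤ 1 a.e. If ∫_Q ξ·(ρ − z) ≥ 0 for every measurable z with 0 ≤ z ≤ 1 a.e. and ξ·(ρ−z) integrable, then ξ(x) ∈ ∂I_{[0,1]}(ρ(x)) for a.e. x ∈ Q, i.e., a.e. ξ ≤ 0 where ρ = 0, ξ = 0 where 0 < ρ < 1, and ξ ≥ 0 where ρ = 1. -/

import Mathlib

open MeasureTheory

lemma aux13 {Q : Type*} [MeasurableSpace Q] (μ : Measure Q) [SigmaFinite μ]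
    (ξ ρ : Q → ℝ) (hξ : AEStronglyMeasurable ξ μ) (hρ : AEStronglyMeasurable ρ μ)
    (hρ01 : ∀ᵐ x ∂μ, 0 ≤ ρ x ∧ ρ x ≤ 1)
    (hineq : ∀ z : Q → ℝ, Measurable z → (∀ᵐ x ∂μ, 0 ≤ z x ∧ z x ≤ 1) →
      Integrable (fun x => ξ x * (ρ x - z x)) μ →
      0 ≤ ∫ x, ξ x * (ρ x - z x) ∂μ) :
    ∀ᵐ x ∂μ, 0 < ξ x → ρ x = 1 := by
  classical
  set ξ' : Q → ℝ := hξ.mk ξ with hξ'def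
  have hξm : Measurable ξ' := hξ.stronglyMeasurable_mk.measurable
  have hξeq : ξ =ᵐ[μ] ξ' := hξ.ae_eq_mk
  set ρ'' : Q → ℝ := fun x => max 0 (min 1 (hρ.mk ρ x)) with hρ''def
  have hρ''m : Measurable ρ'' :=
    measurable_const.max (measurable_const.min hρ.stronglyMeasurable_mk.measurable)
  have hρ''01 : ∀ x, 0 ≤ ρ'' x ∧ ρ'' x ≤ 1 := fun x =>
    ⟨le_max_left _ _, max_le zero_le_one (min_le_left _ _)⟩
  have hρeq : ρ =ᵐ[μ] ρ'' := by
    filter_upwards [hρ.ae_eq_mk, hρ01] with x h1 h2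
    simp only [hρ''def, ← h1, min_eq_right h2.2, max_eq_right h2.1]
  set A : ℕ → Set Q := fun n => ξ' ⁻¹' Set.Ioc 0 (n : ℝ) ∩ spanningSets μ n with hAdef
  have hA : ∀ n, MeasurableSet (A n) := fun n =>
    (hξm measurableSet_Ioc).inter (measurableSet_spanningSets μ n)
  have hAfin : ∀ n, μ (A n) < ⊤ := fun n =>
    lt_of_le_of_lt (measure_mono Set.inter_subset_right) (measure_spanningSets_lt_top μ n)
  set z : ℕ → Q → ℝ := fun n => (A n).piecewise 1 ρ'' with hzdef
  have hzm : ∀ n, Measurable (z n) := fun n =>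
    Measurable.piecewise (hA n) measurable_one hρ''m
  have hz01 : ∀ n, ∀ x, 0 ≤ z n x ∧ z n x ≤ 1 := by
    intro n x
    by_cases hmem : x ∈ A n
    · simp [hzdef, Set.piecewise_eq_of_mem _ _ _ hmem]
    · simp only [hzdef, Set.piecewise_eq_of_notMem _ _ _ hmem]
      exact hρ''01 x
  set g : ℕ → Q → ℝ := fun n => (A n).indicator (fun x => ξ x * (ρ x - 1)) with hgdef
  have hcong : ∀ n, (fun x => ξ x * (ρ x - z n x)) =ᵐ[μ] g n := by
    intro n
    filter_upwards [hρeq] with x hx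
    by_cases hmem : x ∈ A n
    · simp [hgdef, hzdef, Set.indicator_of_mem hmem, Set.piecewise_eq_of_mem _ _ _ hmem]
    · simp [hgdef, hzdef, Set.indicator_of_notMem hmem, Set.piecewise_eq_of_notMem _ _ _ hmem, hx]
  have hgint : ∀ n, Integrable (g n) μ := by
    intro n
    have hb : Integrable ((A n).indicator (fun _ => (n : ℝ))) μ := by
      rw [integrable_indicator_iff (hA n)]
      exact integrableOn_const (hAfin n).ne
    refine Integrable.mono' hb
      ((hξ.mul (hρ.sub aestronglyMeasurable_const)).indicator (hA n)) ?_
    filter_upwards [hξeq, hρ01] with x hxeq hxb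
    by_cases hmem : x ∈ A n
    · simp only [hgdef, Set.indicator_of_mem hmem, Real.norm_eq_abs, abs_mul]
      have h1 : |ξ x| ≤ (n : ℝ) := by
        rw [hxeq]
        have := hmem.1
        simp only [Set.mem_preimage, Set.mem_Ioc] at this
        rw [abs_of_pos this.1]; exact this.2
      have h2 : |ρ x - 1| ≤ 1 := abs_le.2 ⟨by linarith [hxb.1], by linarith [hxb.2]⟩
      nlinarith [abs_nonneg (ξ x), abs_nonneg (ρ x - 1)]
    · simp [hgdef, Set.indicator_of_notMem hmem]
  have hgnonpos : ∀ n, (g n) ≤ᵐ[μ] 0 := by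
    intro n
    filter_upwards [hξeq, hρ01] with x hxeq hxb
    by_cases hmem : x ∈ A n
    · simp only [hgdef, Set.indicator_of_mem hmem, Pi.zero_apply]
      have hpos : 0 < ξ x := by
        rw [hxeq]
        have := hmem.1
        simp only [Set.mem_preimage, Set.mem_Ioc] at this
        exact this.1
      nlinarith [hxb.2]
    · simp [hgdef, Set.indicator_of_notMem hmem]
  have hgzero : ∀ n, (g n) =ᵐ[μ] 0 := by
    intro n
    have hfint : Integrable (fun x => ξ x * (ρ x - z n x)) μ :=
      (hgint n).congr (hcong n).symm
    have h1 : 0 ≤ ∫ x, ξ x * (ρ x - z n x) ∂μ :=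
      hineq (z n) (hzm n) (Filter.Eventually.of_forall (hz01 n)) hfint
    have h2 : ∫ x, ξ x * (ρ x - z n x) ∂μ = ∫ x, g n x ∂μ :=
      integral_congr_ae (hcong n)
    have h3 : ∫ x, g n x ∂μ ≤ 0 := integral_nonpos_of_ae (hgnonpos n)
    have h4 : ∫ x, g n x ∂μ = 0 := le_antisymm h3 (h2 ▸ h1)
    have h5 : ∫ x, -(g n x) ∂μ = 0 := by rw [integral_neg, h4, neg_zero]
    have hnn : 0 ≤ᵐ[μ] fun x => -(g n x) := by
      filter_upwards [hgnonpos n] with x hx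
      simpa using hx
    have h6 : (fun x => -(g n x)) =ᵐ[μ] 0 :=
      (integral_eq_zero_iff_of_nonneg_ae hnn ((hgint n).neg)).1 h5
    filter_upwards [h6] with x hx
    simpa using hx
  have hzero : ∀ n, ∀ᵐ x ∂μ, x ∈ A n → ρ x = 1 := by
    intro n
    filter_upwards [hgzero n, hξeq] with x hg hxeq hmem
    simp only [hgdef, Set.indicator_of_mem hmem, Pi.zero_apply] at hg
    have hpos : ξ x ≠ 0 := by
      rw [hxeq]
      have := hmem.1
      simp only [Set.mem_preimage, Set.mem_Ioc] at this
      exact ne_of_gt this.1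
    rcases mul_eq_zero.1 hg with h | h
    · exact absurd h hpos
    · linarith
  have hall : ∀ᵐ x ∂μ, ∀ n, x ∈ A n → ρ x = 1 := ae_all_iff.2 hzero
  filter_upwards [hall, hξeq] with x hx hxeq hpos
  have hpos' : 0 < ξ' x := hxeq ▸ hpos
  obtain ⟨m, hm⟩ : ∃ m, x ∈ spanningSets μ m := by
    have : x ∈ ⋃ n, spanningSets μ n := by rw [iUnion_spanningSets]; trivial
    exact Set.mem_iUnion.1 this
  obtain ⟨n, hn⟩ := exists_nat_ge (ξ' x)
  refine hx (max n m) ⟨?_, monotone_spanningSets μ (le_max_right n m) hm⟩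
  simp only [Set.mem_preimage, Set.mem_Ioc]
  exact ⟨hpos', hn.trans (by exact_mod_cast le_max_left n m)⟩

theorem stmt_13 {Q : Type*} [MeasurableSpace Q] (μ : Measure Q) [SigmaFinite μ]
    (ξ ρ : Q → ℝ) (hξ : MemLp ξ 2 μ) (hρ : MemLp ρ 2 μ)
    (hρ01 : ∀ᵐ x ∂μ, 0 ≤ ρ x ∧ ρ x ≤ 1)
    (hineq : ∀ z : Q → ℝ, Measurable z → (∀ᵐ x ∂μ, 0 ≤ z x ∧ z x ≤ 1) →
      Integrable (fun x => ξ x * (ρ x - z x)) μ →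
      0 ≤ ∫ x, ξ x * (ρ x - z x) ∂μ) :
    ∀ᵐ x ∂μ, (ρ x = 0 → ξ x ≤ 0) ∧ (0 < ρ x → ρ x < 1 → ξ x = 0) ∧
      (ρ x = 1 → 0 ≤ ξ x) := by
  have h1 : ∀ᵐ x ∂μ, 0 < ξ x → ρ x = 1 :=
    aux13 μ ξ ρ hξ.aestronglyMeasurable hρ.aestronglyMeasurable hρ01 hineq
  have h2 : ∀ᵐ x ∂μ, 0 < -ξ x → (1 - ρ x) = 1 := by
    refine aux13 μ (fun x => -ξ x) (fun x => 1 - ρ x) hξ.aestronglyMeasurable.neg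
      (aestronglyMeasurable_const.sub hρ.aestronglyMeasurable) ?_ ?_
    · filter_upwards [hρ01] with x hx
      exact ⟨by linarith [hx.2], by linarith [hx.1]⟩
    · intro z hz hzb hzi
      have hfun : (fun x => -ξ x * ((1 - ρ x) - z x)) = fun x => ξ x * (ρ x - (1 - z x)) := by
        funext x; ring
      rw [hfun] at hzi ⊢
      refine hineq (fun x => 1 - z x) (measurable_const.sub hz) ?_ hzi
      filter_upwards [hzb] with x hx
      exact ⟨by linarith [hx.2], by linarith [hx.1]⟩
  filter_upwards [h1, h2, hρ01] with x H1 H2 Hb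
  refine ⟨?_, ?_, ?_⟩
  · intro h0
    by_contra h
    push_neg at h
    have := H1 h
    rw [h0] at this
    norm_num at this
  · intro ha hb
    by_contra h
    rcases lt_or_gt_of_ne h with hlt | hgt
    · have := H2 (by linarith)
      linarith
    · have := H1 hgt
      linarith
  · intro h1'
    by_contra h
    push_neg at h
    have := H2 (by linarith)
    linarith
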